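/- Let s_a map each unit vector d ∈ ℝ³ to an element s_a(d) ∈ SO(3) with s_a(d)·e₃ = d, and define the section s((d,m)) = (s_a(d), d × m) of the ray space. Then for every g = (R,t) ∈ SE(3) and every ray x = (d,m) ∈ 𝓡, the twist equals h(g,x) = s(g·x)⁻¹·g·s(x) = (s_a(Rd)⁻¹·R·s_a(d), ⟨t, Rd⟩·e₃); in particular its translation component is ⟨t, Rd⟩·e₃. -/

import Mathlib

noncomputable section
open scoped InnerProductSpace

/-- ℝ³ with the Euclidean norm. -/
abbrev E3 : Type := EuclideanSpace ℝ (Fin 3)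

/-- Elements of SE(3): a pair of a 3×3 matrix and a translation vector. -/
abbrev SE3 : Type := Matrix (Fin 3) (Fin 3) ℝ × E3

/-- Matrix-vector multiplication on ℝ³. -/
def mv (R : Matrix (Fin 3) (Fin 3) ℝ) (v : E3) : E3 := WithLp.toLp 2 (R.mulVec v)

/-- Cross product on ℝ³. -/
def cross3 (a b : E3) : E3 :=
  WithLp.toLp 2 ![a 1 * b 2 - a 2 * b 1, a 2 * b 0 - a 0 * b 2, a 0 * b 1 - a 1 * b 0]

/-- `R` is a special orthogonal 3×3 matrix: `RᵀR = I` and `det R = 1`. -/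
def isSO3 (R : Matrix (Fin 3) (Fin 3) ℝ) : Prop :=
  R.transpose * R = 1 ∧ R.det = 1

/-- `(d, m)` are Plücker coordinates of an oriented line: `d` is a unit
direction and `m` is a moment with `⟨d, m⟩ = 0`. -/
def isRay (d m : E3) : Prop := ‖d‖ = 1 ∧ ⟪d, m⟫_ℝ = 0

/-- The standard basis vector e₁. -/
def e1 : E3 := WithLp.toLp 2 ![1, 0, 0]

/-- The standard basis vector e₂. -/
def e2 : E3 := WithLp.toLp 2 ![0, 1, 0]

/-- The standard basis vector e₃. -/
def e3 : E3 := WithLp.toLp 2 ![0, 0, 1]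

/-- Action of `(R, t) ∈ SE(3)` on Plücker coordinates:
`(R,t)·(d,m) = (Rd, Rm + t × (Rd))`. -/
def rayAct (R : Matrix (Fin 3) (Fin 3) ℝ) (t : E3) (d m : E3) : E3 × E3 :=
  (mv R d, mv R m + cross3 t (mv R d))

/-- Multiplication in SE(3): `(R₁,t₁)·(R₂,t₂) = (R₁R₂, t₁ + R₁t₂)`. -/
def se3Mul (g₁ g₂ : SE3) : SE3 := (g₁.1 * g₂.1, g₁.2 + mv g₁.1 g₂.2)

/-- Inverse in SE(3) (for `g.1 ∈ SO(3)`): `(R,t)⁻¹ = (Rᵀ, -Rᵀt)`. -/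
def se3Inv (g : SE3) : SE3 := (g.1.transpose, -(mv g.1.transpose g.2))

/-- Action of `g ∈ SE(3)` on the ray space. -/
def act (g : SE3) (x : E3 × E3) : E3 × E3 := rayAct g.1 g.2 x.1 x.2

/-- Action of `g = (R,t) ∈ SE(3)` on points of ℝ³: `g·p = Rp + t`. -/
def actPt (g : SE3) (p : E3) : E3 := mv g.1 p + g.2

/-- The origin ray `η = (e₃, 0)`. -/
def eta : E3 × E3 := (e3, 0)

/-- The twist `h(g, x) = s(g·x)⁻¹ · g · s(x)` of a section `s`. -/
def twist (s : E3 × E3 → SE3) (g : SE3) (x : E3 × E3) : SE3 :=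
  se3Mul (se3Inv (s (act g x))) (se3Mul g (s x))

/-- Rotation by γ about the z-axis. -/
def RZ (γ : ℝ) : Matrix (Fin 3) (Fin 3) ℝ :=
  !![Real.cos γ, -Real.sin γ, 0; Real.sin γ, Real.cos γ, 0; 0, 0, 1]

/-- Rotation by β about the y-axis. -/
def RY (β : ℝ) : Matrix (Fin 3) (Fin 3) ℝ :=
  !![Real.cos β, 0, Real.sin β; 0, 1, 0; -Real.sin β, 0, Real.cos β]

/-- The underlying line of the ray with Plücker coordinates `(d, m)`:
`L(d,m) = {p : p × d = m}`. -/
def lineOf (d m : E3) : Set E3 := {p : E3 | cross3 p d = m}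

/-- Infimum of the Euclidean distances between points of the line `L(d,m)`
and points of the z-axis. -/
def Dzaxis (d m : E3) : ℝ :=
  sInf {r : ℝ | ∃ p ∈ lineOf d m, ∃ s : ℝ, r = dist p (s • e3)}

/-- The z-coordinate `g(x) = e₃·(c - λ·d)` (with `c = d × m` and
`λ = ((e₁·c)(e₁·d) + (e₂·c)(e₂·d))/(1 - (e₃·d)²)`) of the point of `L(d,m)`
closest to the z-axis (for `d ≠ ±e₃`). -/
def zfoot (d m : E3) : ℝ :=
  ⟪e3, cross3 d m - ((⟪e1, cross3 d m⟫_ℝ * ⟪e1, d⟫_ℝ + ⟪e2, cross3 d m⟫_ℝ * ⟪e2, d⟫_ℝ)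
      / (1 - ⟪e3, d⟫_ℝ ^ 2)) • d⟫_ℝ


lemma cross3_mv_adj (R : Matrix (Fin 3) (Fin 3) ℝ) (a b : E3) :
    cross3 (mv R a) (mv R b) = mv R.adjugate.transpose (cross3 a b) := by
  ext i
  fin_cases i <;>
  · simp [cross3, mv, Matrix.mulVec, dotProduct, Fin.sum_univ_three,
      Matrix.adjugate_fin_three, Matrix.transpose_apply]
    ring

lemma adj_of_SO3 (R : Matrix (Fin 3) (Fin 3) ℝ) (hR : isSO3 R) :
    R.adjugate = R.transpose := by
  have h := Matrix.mul_adjugate R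
  have h2 : R.transpose * (R * R.adjugate) = R.transpose * (R.det • 1) := by rw [h]
  rw [← Matrix.mul_assoc, hR.1, Matrix.one_mul, hR.2] at h2
  simpa using h2

lemma cross3_mv_so3 (R : Matrix (Fin 3) (Fin 3) ℝ) (hR : isSO3 R) (a b : E3) :
    cross3 (mv R a) (mv R b) = mv R (cross3 a b) := by
  rw [cross3_mv_adj, adj_of_SO3 R hR, Matrix.transpose_transpose]

lemma inner_expand (x y : E3) : ⟪x, y⟫_ℝ = x 0 * y 0 + x 1 * y 1 + x 2 * y 2 := by
  simp [PiLp.inner_apply, Fin.sum_univ_three]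
  ring

lemma norm_mv_so3 (R : Matrix (Fin 3) (Fin 3) ℝ) (hR : isSO3 R) (d : E3)
    (hd : ‖d‖ = 1) : ‖mv R d‖ = 1 := by
  have h00 := congrFun (congrFun hR.1 0) 0
  have h11 := congrFun (congrFun hR.1 1) 1
  have h22 := congrFun (congrFun hR.1 2) 2
  have h01 := congrFun (congrFun hR.1 0) 1
  have h02 := congrFun (congrFun hR.1 0) 2
  have h12 := congrFun (congrFun hR.1 1) 2
  simp [Matrix.mul_apply, Matrix.transpose_apply, Fin.sum_univ_three,
    Matrix.one_apply] at h00 h11 h22 h01 h02 h12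
  have h1 : ‖mv R d‖^2 = ‖d‖^2 := by
    rw [← real_inner_self_eq_norm_sq, ← real_inner_self_eq_norm_sq]
    simp only [PiLp.inner_apply, Fin.sum_univ_three, RCLike.inner_apply, conj_trivial,
      mv, Matrix.mulVec, dotProduct, PiLp.toLp_apply]
    linear_combination d 0^2*h00 + d 1^2*h11 + d 2^2*h22 + 2*d 0*d 1*h01 +
      2*d 0*d 2*h02 + 2*d 1*d 2*h12
  nlinarith [norm_nonneg (mv R d), h1]

lemma triple_cross (a b : E3) (ha : ‖a‖ = 1) :
    cross3 a (cross3 b a) = b - ⟪b, a⟫_ℝ • a := by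
  have h1 : a 0 * a 0 + a 1 * a 1 + a 2 * a 2 = 1 := by
    have := real_inner_self_eq_norm_sq a
    rw [ha, inner_expand] at this; linarith
  rw [inner_expand]
  ext i
  fin_cases i
  · simp [cross3]; linear_combination b 0 * h1
  · simp [cross3]; linear_combination b 1 * h1
  · simp [cross3]; linear_combination b 2 * h1

lemma cross3_add_right (a b c : E3) : cross3 a (b + c) = cross3 a b + cross3 a c := by
  ext i; fin_cases i <;> simp [cross3] <;> ring_nf

/-- for the section `s((d,m)) = (s_a(d), d × m)`, the twist of
`g = (R,t)` at `x = (d,m)` equals `(s_a(Rd)⁻¹·R·s_a(d), ⟨t, Rd⟩·e₃)`. -/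
theorem statement6 (sa : E3 → Matrix (Fin 3) (Fin 3) ℝ)
    (hsa : ∀ u : E3, ‖u‖ = 1 → isSO3 (sa u) ∧ mv (sa u) e3 = u)
    (R : Matrix (Fin 3) (Fin 3) ℝ) (t : E3) (hR : isSO3 R)
    (d m : E3) (h : isRay d m) :
    twist (fun x => (sa x.1, cross3 x.1 x.2)) (R, t) (d, m)
      = ((sa (mv R d)).transpose * R * sa d, ⟪t, mv R d⟫_ℝ • e3) := by
  obtain ⟨hd, _⟩ := h
  set d' : E3 := mv R d with hd'
  have hd'n : ‖d'‖ = 1 := norm_mv_so3 R hR d hd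
  obtain ⟨hQ, hQe⟩ := hsa d' hd'n
  obtain ⟨hP, hPe⟩ := hsa d hd
  have hcross : cross3 d' (mv R m + cross3 t d')
      = mv R (cross3 d m) + (t - ⟪t, d'⟫_ℝ • d') := by
    rw [cross3_add_right, cross3_mv_so3 R hR, triple_cross d' t hd'n, real_inner_comm]
  have hkey : -(mv (sa d').transpose (cross3 d' (mv R m + cross3 t d')))
      + mv (sa d').transpose (t + mv R (cross3 d m)) = ⟪t, d'⟫_ℝ • e3 := by
    rw [hcross]
    have : -(mv (sa d').transpose (mv R (cross3 d m) + (t - ⟪t, d'⟫_ℝ • d')))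
        + mv (sa d').transpose (t + mv R (cross3 d m))
        = mv (sa d').transpose (⟪t, d'⟫_ℝ • d') := by
      simp only [mv, WithLp.ofLp_add, WithLp.ofLp_sub]
      rw [Matrix.mulVec_add, Matrix.mulVec_add, Matrix.mulVec_sub]
      simp only [WithLp.toLp_add, WithLp.toLp_sub]
      abel
    rw [this]
    have h2 : mv (sa d').transpose (⟪t, d'⟫_ℝ • d') = ⟪t, d'⟫_ℝ • mv (sa d').transpose d' := by
      ext i
      simp [mv, Matrix.mulVec, dotProduct, Fin.sum_univ_three]
      ring
    have h4 : mv (sa d').transpose d' = mv (sa d').transpose (mv (sa d') e3) := by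
      rw [hQe]
    rw [h2, h4]
    simp [mv, Matrix.mulVec_mulVec, hQ.1, Matrix.one_mulVec]
  show ((sa d').transpose * (R * sa d),
      -(mv (sa d').transpose (cross3 d' (mv R m + cross3 t d')))
        + mv (sa d').transpose (t + mv R (cross3 d m)))
    = ((sa (mv R d)).transpose * R * sa d, ⟪t, mv R d⟫_ℝ • e3)
  rw [hkey, ← Matrix.mul_assoc]


end
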